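/- Let f₁, f₂ : ℝ → (0,∞) be continuous bounded densities and let π be a probability measure on ℝ. If π((0,∞)) > 0 and for every θ ∈ (0,∞) one has lim_{x→∞} f₂(x−θ)/f₂(x) = ∞, then for every fixed x₁ ∈ ℝ, L_π(x₁,x₂) → ∞ as x₂ → ∞. Symmetrically, if π((−∞,0)) > 0 and for every θ ∈ (−∞,0) one has lim_{x→−∞} f₂(x−θ)/f₂(x) = ∞, then for every fixed x₁ ∈ ℝ, L_π(x₁,x₂) → ∞ as x₂ → −∞. -/

import Mathlib

open MeasureTheory Filter
open scoped ENNReal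

lemma key_stmt13
    (f₁ f₂ : ℝ → ℝ)
    (h₁c : Continuous f₁) (h₂c : Continuous f₂)
    (h₁p : ∀ x, 0 < f₁ x) (h₂p : ∀ x, 0 < f₂ x)
    (M : ℝ) (h₁b : ∀ x, f₁ x ≤ M) (h₂b : ∀ x, f₂ x ≤ M)
    (π : Measure ℝ) (hπ : IsProbabilityMeasure π)
    (hpos : 0 < π (Set.Ioi (0 : ℝ)))
    (hr : ∀ θ : ℝ, 0 < θ → Tendsto (fun x => f₂ (x - θ) / f₂ x) atTop atTop)
    (x₁ : ℝ) :
    Tendsto (fun x₂ => ∫ θ, f₁ (x₁ - θ) * f₂ (x₂ - θ) / (f₁ x₁ * f₂ x₂) ∂π)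
      atTop atTop := by
  set g : ℝ → ℝ → ℝ := fun x₂ θ => f₁ (x₁ - θ) * f₂ (x₂ - θ) / (f₁ x₁ * f₂ x₂) with hg
  have hgpos : ∀ x₂ θ, 0 < g x₂ θ := by
    intro x₂ θ
    exact div_pos (mul_pos (h₁p _) (h₂p _)) (mul_pos (h₁p _) (h₂p _))
  have hgmeas : ∀ x₂, Measurable (g x₂) := by
    intro x₂
    exact (((h₁c.comp (continuous_const.sub continuous_id)).mul
      (h₂c.comp (continuous_const.sub continuous_id))).div_const _).measurable
  have hMpos : 0 < M := lt_of_lt_of_le (h₁p 0) (h₁b 0)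
  have hgbound : ∀ x₂ θ, g x₂ θ ≤ M * M / (f₁ x₁ * f₂ x₂) := by
    intro x₂ θ
    exact div_le_div₀ (mul_nonneg hMpos.le hMpos.le)
      (mul_le_mul (h₁b _) (h₂b _) (h₂p _).le hMpos.le)
      (mul_pos (h₁p _) (h₂p _)) le_rfl
  have hfin : ∀ x₂, ∫⁻ θ, ENNReal.ofReal (g x₂ θ) ∂π ≠ ⊤ := by
    intro x₂
    have hle : ∫⁻ θ, ENNReal.ofReal (g x₂ θ) ∂π ≤
        ∫⁻ _, ENNReal.ofReal (M * M / (f₁ x₁ * f₂ x₂)) ∂π :=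
      lintegral_mono fun θ => ENNReal.ofReal_le_ofReal (hgbound x₂ θ)
    rw [lintegral_const] at hle
    exact ne_top_of_le_ne_top (by simp [ENNReal.mul_ne_top]) hle
  have heq : ∀ x₂, ∫ θ, g x₂ θ ∂π = (∫⁻ θ, ENNReal.ofReal (g x₂ θ) ∂π).toReal := by
    intro x₂
    exact integral_eq_lintegral_of_nonneg_ae
      (Filter.Eventually.of_forall fun θ => (hgpos x₂ θ).le)
      (hgmeas x₂).aestronglyMeasurable
  rw [tendsto_iff_seq_tendsto]
  intro u hu
  have hlimtop : ∀ θ ∈ Set.Ioi (0 : ℝ),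
      Filter.liminf (fun n => ENNReal.ofReal (g (u n) θ)) atTop = ⊤ := by
    intro θ hθ
    have h1 : (fun x₂ => g x₂ θ) =
        fun x₂ => (f₁ (x₁ - θ) / f₁ x₁) * (f₂ (x₂ - θ) / f₂ x₂) := by
      funext x₂; rw [hg]; rw [div_mul_div_comm]
    have h2 : Tendsto (fun x₂ => g x₂ θ) atTop atTop := by
      rw [h1]
      exact Tendsto.const_mul_atTop (div_pos (h₁p _) (h₁p _)) (hr θ hθ)
    have h3 : Tendsto (fun n => ENNReal.ofReal (g (u n) θ)) atTop (nhds ⊤) :=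
      ENNReal.tendsto_ofReal_atTop.comp (h2.comp hu)
    exact h3.liminf_eq
  have hcongr : ∫⁻ θ in Set.Ioi (0 : ℝ),
      Filter.liminf (fun n => ENNReal.ofReal (g (u n) θ)) atTop ∂π =
      ∫⁻ _ in Set.Ioi (0 : ℝ), (⊤ : ℝ≥0∞) ∂π :=
    setLIntegral_congr_fun measurableSet_Ioi hlimtop
  have h1 : (⊤ : ℝ≥0∞) ≤
      ∫⁻ θ, Filter.liminf (fun n => ENNReal.ofReal (g (u n) θ)) atTop ∂π := by
    calc (⊤ : ℝ≥0∞) = ⊤ * π (Set.Ioi 0) := (ENNReal.top_mul hpos.ne').symm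
      _ = ∫⁻ _ in Set.Ioi (0 : ℝ), (⊤ : ℝ≥0∞) ∂π := (setLIntegral_const _ _).symm
      _ = ∫⁻ θ in Set.Ioi (0 : ℝ),
            Filter.liminf (fun n => ENNReal.ofReal (g (u n) θ)) atTop ∂π := hcongr.symm
      _ ≤ _ := setLIntegral_le_lintegral _ _
  have hfatou : Filter.liminf (fun n => ∫⁻ θ, ENNReal.ofReal (g (u n) θ) ∂π) atTop = ⊤ :=
    top_unique (h1.trans (lintegral_liminf_le
      fun n => ENNReal.measurable_ofReal.comp (hgmeas (u n))))
  have hcomp : ((fun x₂ => ∫ θ, f₁ (x₁ - θ) * f₂ (x₂ - θ) / (f₁ x₁ * f₂ x₂) ∂π) ∘ u)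
      = fun n => ∫ θ, g (u n) θ ∂π := rfl
  rw [hcomp, tendsto_atTop]
  intro C
  have hev : ∀ᶠ n in atTop,
      ENNReal.ofReal (max C 0) < ∫⁻ θ, ENNReal.ofReal (g (u n) θ) ∂π := by
    refine Filter.eventually_lt_of_lt_liminf ?_ ?_
    · rw [hfatou]; exact ENNReal.ofReal_lt_top
    · isBoundedDefault
  filter_upwards [hev] with n hn
  rw [heq (u n)]
  calc C ≤ max C 0 := le_max_left _ _
    _ = (ENNReal.ofReal (max C 0)).toReal := by
        rw [ENNReal.toReal_ofReal (le_max_right _ _)]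
    _ ≤ (∫⁻ θ, ENNReal.ofReal (g (u n) θ) ∂π).toReal :=
        ENNReal.toReal_mono (hfin (u n)) hn.le

theorem stmt_13
    (f₁ f₂ : ℝ → ℝ)
    (h₁c : Continuous f₁) (h₂c : Continuous f₂)
    (h₁p : ∀ x, 0 < f₁ x) (h₂p : ∀ x, 0 < f₂ x)
    (M : ℝ) (h₁b : ∀ x, f₁ x ≤ M) (h₂b : ∀ x, f₂ x ≤ M)
    (h₁i : ∫ x, f₁ x = 1) (h₂i : ∫ x, f₂ x = 1)
    (π : Measure ℝ) (hπ : IsProbabilityMeasure π)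
    (L : ℝ × ℝ → ℝ)
    (hL : L = fun x : ℝ × ℝ =>
      ∫ θ, f₁ (x.1 - θ) * f₂ (x.2 - θ) / (f₁ x.1 * f₂ x.2) ∂π) :
    ((0 < π (Set.Ioi (0 : ℝ)) →
      (∀ θ : ℝ, 0 < θ → Tendsto (fun x => f₂ (x - θ) / f₂ x) atTop atTop) →
      ∀ x₁ : ℝ, Tendsto (fun x₂ => L (x₁, x₂)) atTop atTop) ∧
    (0 < π (Set.Iio (0 : ℝ)) →
      (∀ θ : ℝ, θ < 0 → Tendsto (fun x => f₂ (x - θ) / f₂ x) atBot atTop) →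
      ∀ x₁ : ℝ, Tendsto (fun x₂ => L (x₁, x₂)) atBot atTop)) := by
  constructor
  · intro hpos hr x₁
    have := key_stmt13 f₁ f₂ h₁c h₂c h₁p h₂p M h₁b h₂b π hπ hpos hr x₁
    simpa [hL] using this
  · intro hpos hr x₁
    set f₁' : ℝ → ℝ := fun x => f₁ (-x) with hf₁'
    set f₂' : ℝ → ℝ := fun x => f₂ (-x) with hf₂'
    set π' : Measure ℝ := Measure.map (fun θ : ℝ => -θ) π with hπ'
    have hmeasneg : Measurable (fun θ : ℝ => -θ) := measurable_neg
    have hπ'prob : IsProbabilityMeasure π' :=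
      Measure.isProbabilityMeasure_map hmeasneg.aemeasurable
    have hπ'pos : 0 < π' (Set.Ioi (0 : ℝ)) := by
      rw [hπ', Measure.map_apply hmeasneg measurableSet_Ioi]
      have hpre : (fun θ : ℝ => -θ) ⁻¹' Set.Ioi 0 = Set.Iio 0 := by
        ext x; simp
      rwa [hpre]
    have hr' : ∀ θ : ℝ, 0 < θ →
        Tendsto (fun x => f₂' (x - θ) / f₂' x) atTop atTop := by
      intro θ hθ
      have h1 : Tendsto (fun x => f₂ (x - (-θ)) / f₂ x) atBot atTop :=
        hr (-θ) (by linarith)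
      have h2 : Tendsto (fun x : ℝ => -x) atTop atBot := tendsto_neg_atTop_atBot
      have h3 := h1.comp h2
      have h4 : (fun x => f₂' (x - θ) / f₂' x)
          = (fun x => f₂ (x - (-θ)) / f₂ x) ∘ (fun x : ℝ => -x) := by
        funext x
        simp only [Function.comp_apply, hf₂']
        rw [show -(x - θ) = -x - -θ from by ring]
      rw [h4]
      exact h3
    have hk := key_stmt13 f₁' f₂' (h₁c.comp continuous_neg) (h₂c.comp continuous_neg)
      (fun x => h₁p (-x)) (fun x => h₂p (-x)) M (fun x => h₁b (-x)) (fun x => h₂b (-x))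
      π' hπ'prob hπ'pos hr' (-x₁)
    have hid : ∀ x₂ : ℝ,
        (∫ θ, f₁' (-x₁ - θ) * f₂' (x₂ - θ) / (f₁' (-x₁) * f₂' x₂) ∂π') =
        L (x₁, -x₂) := by
      intro x₂
      rw [hπ', integral_map hmeasneg.aemeasurable]
      · rw [hL]
        simp only [hf₁', hf₂']
        congr 1
        funext θ
        rw [show -(-x₁ - -θ) = x₁ - θ from by ring,
            show -(x₂ - -θ) = -x₂ - θ from by ring,
            show -(-x₁ : ℝ) = x₁ from by ring]
      · apply Continuous.aestronglyMeasurable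
        simp only [hf₁', hf₂']
        exact ((h₁c.comp (continuous_neg.comp (continuous_const.sub continuous_id))).mul
          (h₂c.comp (continuous_neg.comp (continuous_const.sub continuous_id)))).div_const _
    have hk' : Tendsto (fun x₂ => L (x₁, -x₂)) atTop atTop := by
      simp only [hid] at hk
      exact hk
    have hfinal := hk'.comp tendsto_neg_atBot_atTop
    refine hfinal.congr ?_
    intro x
    simp [Function.comp]
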